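/- arXiv:1911.01859 — 4 statements merged into one kernel-verified Lean document; each statement's English description precedes it below -/
import Mathlib

section
/- With the CAM setup, if in addition B = 0 and Λ is nonsingular, then γ* := Λ⁻¹Ω satisfies MSE(θ̂_{γ*}) − MSE(θ̂₀) = −ΩᵀΛ⁻¹Ω ≤ 0, and for every γ ∈ ℝ^k one has MSE(θ̂_{γ*}) ≤ MSE(θ̂_γ); that is, γ* achieves the maximum reduction in mean squared error. -/
open MeasureTheory ProbabilityTheory Matrix
open scoped NNReal ENNReal BigOperators

/-- Covariance of two real random variables:
`Cov(f,g) := E[(f − E f)(g − E g)]`. -/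
noncomputable def cov {Ωs : Type*} [MeasurableSpace Ωs] (μ : Measure Ωs) (f g : Ωs → ℝ) : ℝ :=
  ∫ ω, (f ω - ∫ ω', f ω' ∂μ) * (g ω - ∫ ω', g ω' ∂μ) ∂μ

/-- Product of two L² functions is integrable. -/
lemma l2_mul_integrable {Ωs : Type*} [MeasurableSpace Ωs] {P : Measure Ωs}
    {f g : Ωs → ℝ} (hf : MemLp f 2 P) (hg : MemLp g 2 P) :
    Integrable (fun ω => f ω * g ω) P := by
  have h := L2.integrable_inner (𝕜 := ℝ) (hf.toLp f) (hg.toLp g)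
  refine h.congr ?_
  filter_upwards [hf.coeFn_toLp, hg.coeFn_toLp] with ω h1 h2
  simp [h1, h2, RCLike.inner_apply, mul_comm]

lemma cov_eq_integral_mul {Ωs : Type*} [MeasurableSpace Ωs] {P : Measure Ωs}
    [IsProbabilityMeasure P] {f g : Ωs → ℝ} (hf : Integrable f P) (hg : Integrable g P)
    (hfg : Integrable (fun ω => f ω * g ω) P) :
    cov P f g = (∫ ω, f ω * g ω ∂P) - (∫ ω, f ω ∂P) * (∫ ω, g ω ∂P) := by
  unfold cov
  have h1 : ∀ ω, (f ω - ∫ ω', f ω' ∂P) * (g ω - ∫ ω', g ω' ∂P)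
      = f ω * g ω - (∫ ω', f ω' ∂P) * g ω - (∫ ω', g ω' ∂P) * f ω
        + (∫ ω', f ω' ∂P) * (∫ ω', g ω' ∂P) := by intro ω; ring
  simp only [h1]
  have i1 : Integrable (fun ω => f ω * g ω - (∫ ω', f ω' ∂P) * g ω) P :=
    hfg.sub (hg.const_mul _)
  have i2 : Integrable
      (fun ω => f ω * g ω - (∫ ω', f ω' ∂P) * g ω - (∫ ω', g ω' ∂P) * f ω) P :=
    i1.sub (hf.const_mul _)
  rw [integral_add i2 (integrable_const _), integral_sub i1 (hf.const_mul _),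
    integral_sub hfg (hg.const_mul _), integral_const_mul, integral_const_mul,
    integral_const, probReal_univ]
  simp
  ring

lemma sum_sq_integral {Ωs : Type*} [MeasurableSpace Ωs] {P : Measure Ωs}
    [IsProbabilityMeasure P] {k : ℕ} {Z : Fin k → Ωs → ℝ}
    (hZ : ∀ j, MemLp (Z j) 2 P) (γ : Fin k → ℝ) :
    ∫ ω, (∑ j, γ j * Z j ω) ^ 2 ∂P
      = ∑ i, ∑ j, γ i * γ j * ∫ ω, Z i ω * Z j ω ∂P := by
  have h1 : ∀ ω, (∑ j, γ j * Z j ω) ^ 2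
      = ∑ i, ∑ j, γ i * γ j * (Z i ω * Z j ω) := by
    intro ω
    rw [sq, Finset.sum_mul_sum]
    exact Finset.sum_congr rfl fun i _ => Finset.sum_congr rfl fun j _ => by ring
  simp only [h1]
  rw [integral_finset_sum _ fun i _ => integrable_finset_sum _
      fun j _ => (l2_mul_integrable (hZ i) (hZ j)).const_mul _]
  refine Finset.sum_congr rfl fun i _ => ?_
  rw [integral_finset_sum _ fun j _ => (l2_mul_integrable (hZ i) (hZ j)).const_mul _]
  exact Finset.sum_congr rfl fun j _ => integral_const_mul _ _

lemma expand_sq {Ωs : Type*} [MeasurableSpace Ωs] {P : Measure Ωs}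
    [IsProbabilityMeasure P] {k : ℕ} {X : Ωs → ℝ} {Z : Fin k → Ωs → ℝ}
    (hX : MemLp X 2 P) (hZ : ∀ j, MemLp (Z j) 2 P) (γ : Fin k → ℝ) :
    ∫ ω, (X ω - ∑ j, γ j * Z j ω) ^ 2 ∂P
      = (∫ ω, X ω ^ 2 ∂P) - 2 * ∑ j, γ j * ∫ ω, X ω * Z j ω ∂P
        + ∑ i, ∑ j, γ i * γ j * ∫ ω, Z i ω * Z j ω ∂P := by
  have hS : MemLp (fun ω => ∑ j, γ j * Z j ω) 2 P := by
    have h := memLp_finset_sum' (μ := P) (p := 2) Finset.univ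
      (f := fun j ω => γ j * Z j ω) (fun j _ => (hZ j).const_mul (γ j))
    rwa [show (∑ x : Fin k, fun ω => γ x * Z x ω) = fun ω => ∑ x : Fin k, γ x * Z x ω
      from funext fun ω => by simp] at h
  have hXX : Integrable (fun ω => X ω ^ 2) P := by
    simpa [sq] using l2_mul_integrable hX hX
  have hXS : Integrable (fun ω => X ω * ∑ j, γ j * Z j ω) P := l2_mul_integrable hX hS
  have hSS : Integrable (fun ω => (∑ j, γ j * Z j ω) ^ 2) P := by
    simpa [sq] using l2_mul_integrable hS hS
  have h1 : ∀ ω, (X ω - ∑ j, γ j * Z j ω) ^ 2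
      = X ω ^ 2 - 2 * (X ω * ∑ j, γ j * Z j ω) + (∑ j, γ j * Z j ω) ^ 2 := by
    intro ω; ring
  simp only [h1]
  have i1 : Integrable (fun ω => X ω ^ 2 - 2 * (X ω * ∑ j, γ j * Z j ω)) P :=
    hXX.sub (hXS.const_mul 2)
  rw [integral_add i1 hSS, integral_sub hXX (hXS.const_mul 2), integral_const_mul,
    sum_sq_integral hZ γ]
  have h2 : ∀ ω, X ω * ∑ j, γ j * Z j ω = ∑ j, γ j * (X ω * Z j ω) := by
    intro ω
    rw [Finset.mul_sum]
    exact Finset.sum_congr rfl fun j _ => by ring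
  have h3 : ∫ ω, X ω * ∑ j, γ j * Z j ω ∂P = ∑ j, γ j * ∫ ω, X ω * Z j ω ∂P := by
    simp only [h2]
    rw [integral_finset_sum _ fun j _ => (l2_mul_integrable hX (hZ j)).const_mul _]
    exact Finset.sum_congr rfl fun j _ => integral_const_mul _ _
  rw [h3]

lemma quad_nonneg {Ωs : Type*} [MeasurableSpace Ωs] {P : Measure Ωs}
    [IsProbabilityMeasure P] {k : ℕ} {Z : Fin k → Ωs → ℝ}
    (hZ : ∀ j, MemLp (Z j) 2 P) (γ : Fin k → ℝ) :
    0 ≤ ∑ i, ∑ j, γ i * γ j * ∫ ω, Z i ω * Z j ω ∂P := by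
  rw [← sum_sq_integral hZ γ]
  exact integral_nonneg fun ω => sq_nonneg _

/-- **Proposition 1, second part.** CAM setup: on a probability space, let
`θ ∈ ℝ` be a fixed parameter, `θ̂₀` a square-integrable real random variable, and
`θ̂₀M, θ̂M` square-integrable random vectors in `ℝ^k` such that `θ̂M` is independent of
the pair `(θ̂₀, θ̂₀M)`.  For `γ ∈ ℝ^k` the CAM estimator is
`θ̂_γ := θ̂₀ − γᵀ(θ̂₀M − θ̂M)` and `MSE(θ̂) := E[(θ̂ − θ)²]`.  Assume in addition that
`B := E(θ̂₀M − θ̂M) = 0` and `Λ := Var(θ̂₀M − θ̂M)` is nonsingular.  Then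
`γ* := Λ⁻¹Ω` satisfies `MSE(θ̂_{γ*}) − MSE(θ̂₀) = −ΩᵀΛ⁻¹Ω ≤ 0`, and
`MSE(θ̂_{γ*}) ≤ MSE(θ̂_γ)` for every `γ ∈ ℝ^k`. -/
theorem stmt1 {Ωs : Type*} [MeasurableSpace Ωs] (P : Measure Ωs) [IsProbabilityMeasure P]
    (k : ℕ) (θ : ℝ) (θhat0 : Ωs → ℝ) (θhat0M θhatM : Ωs → Fin k → ℝ)
    (hmeas0 : Measurable θhat0) (hmeas0M : Measurable θhat0M) (hmeasM : Measurable θhatM)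
    (hL2_0 : MemLp θhat0 2 P)
    (hL2_0M : ∀ j, MemLp (fun ω => θhat0M ω j) 2 P)
    (hL2_M : ∀ j, MemLp (fun ω => θhatM ω j) 2 P)
    (hindep : IndepFun (fun ω => (θhat0 ω, θhat0M ω)) θhatM P)
    (hB : ∀ j, (∫ ω, (θhat0M ω j - θhatM ω j) ∂P) = 0)
    (Λ : Matrix (Fin k) (Fin k) ℝ)
    (hΛ : ∀ i j, Λ i j =
      cov P (fun ω => θhat0M ω i - θhatM ω i) (fun ω => θhat0M ω j - θhatM ω j))
    (hΛinv : IsUnit Λ.det)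
    (Ωv : Fin k → ℝ) (hΩ : ∀ j, Ωv j = cov P θhat0 (fun ω => θhat0M ω j))
    (γstar : Fin k → ℝ) (hγstar : γstar = Λ⁻¹.mulVec Ωv) :
    ((∫ ω, (θhat0 ω - (∑ j, γstar j * (θhat0M ω j - θhatM ω j)) - θ) ^ 2 ∂P)
        - (∫ ω, (θhat0 ω - θ) ^ 2 ∂P) = -(Ωv ⬝ᵥ Λ⁻¹.mulVec Ωv))
      ∧ -(Ωv ⬝ᵥ Λ⁻¹.mulVec Ωv) ≤ 0
      ∧ ∀ γ : Fin k → ℝ,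
          (∫ ω, (θhat0 ω - (∑ j, γstar j * (θhat0M ω j - θhatM ω j)) - θ) ^ 2 ∂P)
            ≤ ∫ ω, (θhat0 ω - (∑ j, γ j * (θhat0M ω j - θhatM ω j)) - θ) ^ 2 ∂P := by
  have hZ2 : ∀ j, MemLp (fun ω => θhat0M ω j - θhatM ω j) 2 P :=
    fun j => (hL2_0M j).sub (hL2_M j)
  have hX2 : MemLp (fun ω => θhat0 ω - θ) 2 P := hL2_0.sub (memLp_const θ)
  have hint0 : Integrable θhat0 P := hL2_0.integrable one_le_two
  have hint0M : ∀ j, Integrable (fun ω => θhat0M ω j) P :=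
    fun j => (hL2_0M j).integrable one_le_two
  have hintM : ∀ j, Integrable (fun ω => θhatM ω j) P :=
    fun j => (hL2_M j).integrable one_le_two
  -- means agree
  have hEM : ∀ j, (∫ ω, θhatM ω j ∂P) = ∫ ω, θhat0M ω j ∂P := by
    intro j
    have h := hB j
    rw [integral_sub (hint0M j) (hintM j)] at h
    linarith
  -- independence of θhat0 and θhatM j
  have hindep0M : ∀ j, IndepFun θhat0 (fun ω => θhatM ω j) P := by
    intro j
    exact hindep.comp measurable_fst (measurable_pi_apply j)
  have hmulM : ∀ j, (∫ ω, θhat0 ω * θhatM ω j ∂P)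
      = (∫ ω, θhat0 ω ∂P) * ∫ ω, θhatM ω j ∂P := by
    intro j
    have := (hindep0M j).integral_mul_eq_mul_integral hint0.1 (hintM j).1
    simpa [Pi.mul_apply] using this
  -- Λ entries as raw second moments
  have hΛ' : ∀ i j, Λ i j = ∫ ω, (θhat0M ω i - θhatM ω i) * (θhat0M ω j - θhatM ω j) ∂P := by
    intro i j
    rw [hΛ i j]
    unfold cov
    rw [hB i, hB j]
    simp
  -- Ω entries as raw cross moments
  have hΩ' : ∀ j, Ωv j = ∫ ω, (θhat0 ω - θ) * (θhat0M ω j - θhatM ω j) ∂P := by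
    intro j
    rw [hΩ j, cov_eq_integral_mul hint0 (hint0M j) (l2_mul_integrable hL2_0 (hL2_0M j))]
    have e : ∀ ω, (θhat0 ω - θ) * (θhat0M ω j - θhatM ω j)
        = θhat0 ω * θhat0M ω j - θhat0 ω * θhatM ω j - θ * (θhat0M ω j - θhatM ω j) := by
      intro ω; ring
    have i1 : Integrable (fun ω => θhat0 ω * θhat0M ω j) P :=
      l2_mul_integrable hL2_0 (hL2_0M j)
    have i2 : Integrable (fun ω => θhat0 ω * θhatM ω j) P :=
      l2_mul_integrable hL2_0 (hL2_M j)
    have i3 : Integrable (fun ω => θhat0M ω j - θhatM ω j) P := (hint0M j).sub (hintM j)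
    have i12 : Integrable (fun ω => θhat0 ω * θhat0M ω j - θhat0 ω * θhatM ω j) P :=
      i1.sub i2
    have hR : (∫ ω, (θhat0 ω - θ) * (θhat0M ω j - θhatM ω j) ∂P)
        = (∫ ω, θhat0 ω * θhat0M ω j ∂P)
          - (∫ ω, θhat0 ω ∂P) * ∫ ω, θhat0M ω j ∂P := by
      simp only [e]
      rw [integral_sub i12 (i3.const_mul θ), integral_sub i1 i2, integral_const_mul,
        hB j, hmulM j, hEM j]
      ring
    rw [hR]
  -- the master MSE formula
  have hMSE : ∀ γ : Fin k → ℝ,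
      (∫ ω, (θhat0 ω - (∑ j, γ j * (θhat0M ω j - θhatM ω j)) - θ) ^ 2 ∂P)
        = (∫ ω, (θhat0 ω - θ) ^ 2 ∂P) - 2 * (γ ⬝ᵥ Ωv) + γ ⬝ᵥ Λ.mulVec γ := by
    intro γ
    have e0 : (∫ ω, (θhat0 ω - (∑ j, γ j * (θhat0M ω j - θhatM ω j)) - θ) ^ 2 ∂P)
        = ∫ ω, ((θhat0 ω - θ) - ∑ j, γ j * (θhat0M ω j - θhatM ω j)) ^ 2 ∂P := by
      apply integral_congr_ae
      filter_upwards with ω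
      ring
    rw [e0, expand_sq hX2 hZ2 γ]
    have hA : ∑ j, γ j * ∫ ω, (θhat0 ω - θ) * (θhat0M ω j - θhatM ω j) ∂P
        = γ ⬝ᵥ Ωv := by
      rw [dotProduct]
      exact Finset.sum_congr rfl fun j _ => by rw [hΩ' j]
    have hBq : γ ⬝ᵥ Λ.mulVec γ = ∑ i, ∑ j, γ i * γ j
        * ∫ ω, (θhat0M ω i - θhatM ω i) * (θhat0M ω j - θhatM ω j) ∂P := by
      simp only [dotProduct, Matrix.mulVec, Finset.mul_sum]
      refine Finset.sum_congr rfl fun i _ => Finset.sum_congr rfl fun j _ => ?_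
      rw [hΛ' i j]
      ring
    rw [hA, hBq]
  -- nonnegativity of the quadratic form
  have hQ : ∀ γ : Fin k → ℝ, 0 ≤ γ ⬝ᵥ Λ.mulVec γ := by
    intro γ
    have h := quad_nonneg hZ2 γ
    have e : γ ⬝ᵥ Λ.mulVec γ
        = ∑ i, ∑ j, γ i * γ j * ∫ ω, (θhat0M ω i - θhatM ω i) * (θhat0M ω j - θhatM ω j) ∂P := by
      simp only [dotProduct, Matrix.mulVec, Finset.mul_sum]
      refine Finset.sum_congr rfl fun i _ => Finset.sum_congr rfl fun j _ => ?_
      rw [hΛ' i j]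
      ring
    rw [e]
    exact h
  -- symmetry of Λ
  have hΛsymm : Λᵀ = Λ := by
    ext i j
    rw [Matrix.transpose_apply, hΛ i j, hΛ j i]
    unfold cov
    exact integral_congr_ae (Filter.Eventually.of_forall fun ω => mul_comm _ _)
  -- basic matrix identities
  have h1 : Λ.mulVec γstar = Ωv := by
    rw [hγstar, Matrix.mulVec_mulVec, Matrix.mul_nonsing_inv _ hΛinv, Matrix.one_mulVec]
  have h2 : γstar ⬝ᵥ Ωv = Ωv ⬝ᵥ Λ⁻¹.mulVec Ωv := by
    rw [hγstar, dotProduct_comm]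
  have h3 : γstar ⬝ᵥ Λ.mulVec γstar = Ωv ⬝ᵥ Λ⁻¹.mulVec Ωv := by
    rw [h1, h2]
  have hsym : ∀ γ : Fin k → ℝ, γstar ⬝ᵥ Λ.mulVec γ = γ ⬝ᵥ Ωv := by
    intro γ
    rw [Matrix.dotProduct_mulVec,
      show γstar ᵥ* Λ = Ωv from by rw [← Matrix.mulVec_transpose, hΛsymm]; exact h1,
      dotProduct_comm]
  refine ⟨?_, ?_, ?_⟩
  · rw [hMSE γstar, h3, h2]
    ring
  · have := hQ γstar
    rw [h3] at this
    linarith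
  · intro γ
    rw [hMSE γstar, hMSE γ]
    have hexp : (γ - γstar) ⬝ᵥ Λ.mulVec (γ - γstar)
        = γ ⬝ᵥ Λ.mulVec γ - 2 * (γ ⬝ᵥ Ωv) + Ωv ⬝ᵥ Λ⁻¹.mulVec Ωv := by
      rw [Matrix.mulVec_sub, sub_dotProduct, dotProduct_sub,
        dotProduct_sub, h1, hsym γ, h2]
      ring
    have hnn := hQ (γ - γstar)
    rw [hexp] at hnn
    rw [h3, h2]
    linarith
end

section
/- In the scalar CAM setup with E(θ̂_{0,m}) = E(θ̂_m), Var(θ̂₀) > 0, Var(θ̂_{0,m}) > 0 and Var(θ̂_{0,m}) + Var(θ̂_m) > 0, the optimal weight γ* := Cov(θ̂₀, θ̂_{0,m}) / (Var(θ̂_{0,m}) + Var(θ̂_m)) satisfies MSE(θ̂_{γ*}) − MSE(θ̂₀) = −Var(θ̂₀) · [Var(θ̂_{0,m}) / (Var(θ̂_{0,m}) + Var(θ̂_m))] · Corr²(θ̂₀, θ̂_{0,m}), where Corr denotes the Pearson correlation. -/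
open MeasureTheory ProbabilityTheory
open scoped NNReal ENNReal

/-- Variance of a real random variable. -/
noncomputable def var {Ωs : Type*} [MeasurableSpace Ωs] (μ : Measure Ωs) (f : Ωs → ℝ) : ℝ :=
  cov μ f f

/-- Pearson correlation of two real random variables. -/
noncomputable def corr {Ωs : Type*} [MeasurableSpace Ωs] (μ : Measure Ωs) (f g : Ωs → ℝ) : ℝ :=
  cov μ f g / Real.sqrt (var μ f * var μ g)

lemma myIntegrableMul {Ωs : Type*} [MeasurableSpace Ωs] {P : Measure Ωs}
    [IsFiniteMeasure P] {f g : Ωs → ℝ} (hf : MemLp f 2 P) (hg : MemLp g 2 P) :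
    Integrable (fun ω => f ω * g ω) P := by
  have h : MemLp (f • g) 1 P := hg.smul hf (hpqr := ⟨by simp [ENNReal.inv_two_add_inv_two]⟩)
  exact h.integrable le_rfl

lemma cov_eq {Ωs : Type*} [MeasurableSpace Ωs] {P : Measure Ωs} [IsProbabilityMeasure P]
    {f g : Ωs → ℝ} (hf : MemLp f 2 P) (hg : MemLp g 2 P) :
    cov P f g = (∫ ω, f ω * g ω ∂P) - (∫ ω, f ω ∂P) * ∫ ω, g ω ∂P := by
  have hif : Integrable f P := hf.integrable one_le_two
  have hig : Integrable g P := hg.integrable one_le_two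
  have hfg := myIntegrableMul hf hg
  set cf := ∫ ω', f ω' ∂P with hcf
  set cg := ∫ ω', g ω' ∂P with hcg
  have h1 : Integrable (fun ω => cf * g ω) P := hig.const_mul cf
  have h2 : Integrable (fun ω => cg * f ω) P := hif.const_mul cg
  have h3 : Integrable (fun ω => f ω * g ω - cf * g ω) P := hfg.sub h1
  have h4 : Integrable (fun ω => f ω * g ω - cf * g ω - cg * f ω) P := h3.sub h2
  unfold cov
  have : ∀ ω, (f ω - cf) * (g ω - cg)
      = f ω * g ω - cf * g ω - cg * f ω + cf * cg := by intro ω; ring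
  simp_rw [← hcf, ← hcg, this]
  rw [integral_add h4 (integrable_const _), integral_sub h3 h2, integral_sub hfg h1,
    integral_const_mul, integral_const_mul, integral_const]
  simp
  ring

/-- Scalar CAM setup: on a probability space, `θ ∈ ℝ` is a fixed
parameter, `θ̂₀, θ̂₀m, θ̂m` are square-integrable real random variables with `θ̂m`
independent of the pair `(θ̂₀, θ̂₀m)`; for `γ ∈ ℝ` the CAM estimator is
`θ̂_γ := θ̂₀ − γ(θ̂₀m − θ̂m)` and `MSE(θ̂) := E[(θ̂ − θ)²]`.  If `E θ̂₀m = E θ̂m`,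
`Var θ̂₀ > 0`, `Var θ̂₀m > 0` and `Var θ̂₀m + Var θ̂m > 0`, then the optimal weight
`γ* := Cov(θ̂₀, θ̂₀m)/(Var θ̂₀m + Var θ̂m)` satisfies
`MSE(θ̂_{γ*}) − MSE(θ̂₀) = −Var θ̂₀ · (Var θ̂₀m/(Var θ̂₀m + Var θ̂m)) · Corr²(θ̂₀, θ̂₀m)`. -/
theorem stmt2 {Ωs : Type*} [MeasurableSpace Ωs] (P : Measure Ωs) [IsProbabilityMeasure P]
    (θ : ℝ) (θhat0 θhat0m θhatm : Ωs → ℝ)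
    (hmeas0 : Measurable θhat0) (hmeas0m : Measurable θhat0m) (hmeasm : Measurable θhatm)
    (hL2_0 : MemLp θhat0 2 P) (hL2_0m : MemLp θhat0m 2 P) (hL2_m : MemLp θhatm 2 P)
    (hindep : IndepFun (fun ω => (θhat0 ω, θhat0m ω)) θhatm P)
    (hmean : (∫ ω, θhat0m ω ∂P) = ∫ ω, θhatm ω ∂P)
    (hv0 : 0 < var P θhat0) (hv0m : 0 < var P θhat0m)
    (hvsum : 0 < var P θhat0m + var P θhatm)
    (γstar : ℝ) (hγstar : γstar = cov P θhat0 θhat0m / (var P θhat0m + var P θhatm)) :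
    (∫ ω, (θhat0 ω - γstar * (θhat0m ω - θhatm ω) - θ) ^ 2 ∂P)
        - (∫ ω, (θhat0 ω - θ) ^ 2 ∂P)
      = -(var P θhat0 * (var P θhat0m / (var P θhat0m + var P θhatm))
            * (corr P θhat0 θhat0m) ^ 2) := by
  -- notation
  set x := θhat0
  set y := θhat0m
  set z := θhatm
  -- independence of components
  have hxz : IndepFun x z P := hindep.comp measurable_fst measurable_id
  have hyz : IndepFun y z P := hindep.comp measurable_snd measurable_id
  -- integrability
  have hix : Integrable x P := hL2_0.integrable one_le_two
  have hiy : Integrable y P := hL2_0m.integrable one_le_two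
  have hiz : Integrable z P := hL2_m.integrable one_le_two
  have hixy : Integrable (fun ω => x ω * y ω) P := myIntegrableMul hL2_0 hL2_0m
  have hixz : Integrable (fun ω => x ω * z ω) P := myIntegrableMul hL2_0 hL2_m
  have hiyz : Integrable (fun ω => y ω * z ω) P := myIntegrableMul hL2_0m hL2_m
  -- product formulas by independence
  have hExz : (∫ ω, x ω * z ω ∂P) = (∫ ω, x ω ∂P) * ∫ ω, z ω ∂P := by
    have := hxz.integral_mul_eq_mul_integral hix.aestronglyMeasurable hiz.aestronglyMeasurable
    simpa [Pi.mul_apply] using this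
  have hEyz : (∫ ω, y ω * z ω ∂P) = (∫ ω, y ω ∂P) * ∫ ω, z ω ∂P := by
    have := hyz.integral_mul_eq_mul_integral hiy.aestronglyMeasurable hiz.aestronglyMeasurable
    simpa [Pi.mul_apply] using this
  -- L2 of differences
  have hL2yz : MemLp (fun ω => y ω - z ω) 2 P := hL2_0m.sub hL2_m
  have hL2xt : MemLp (fun ω => x ω - θ) 2 P := hL2_0.sub (memLp_const θ)
  have hL2cam : MemLp (fun ω => x ω - γstar * (y ω - z ω) - θ) 2 P :=
    (hL2_0.sub ((hL2yz.const_mul γstar))).sub (memLp_const θ)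
  have hIcam : Integrable (fun ω => (x ω - γstar * (y ω - z ω) - θ) ^ 2) P :=
    hL2cam.integrable_sq
  have hI0 : Integrable (fun ω => (x ω - θ) ^ 2) P := hL2xt.integrable_sq
  -- the two key integrals
  have hIyz2 : Integrable (fun ω => (y ω - z ω) ^ 2) P := hL2yz.integrable_sq
  have hIcross : Integrable (fun ω => (x ω - θ) * (y ω - z ω)) P :=
    myIntegrableMul hL2xt hL2yz
  -- difference of MSEs
  have key : (∫ ω, (x ω - γstar * (y ω - z ω) - θ) ^ 2 ∂P) - (∫ ω, (x ω - θ) ^ 2 ∂P)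
      = γstar ^ 2 * (∫ ω, (y ω - z ω) ^ 2 ∂P)
        - 2 * γstar * ∫ ω, (x ω - θ) * (y ω - z ω) ∂P := by
    rw [← integral_sub hIcam hI0]
    have : ∀ ω, (x ω - γstar * (y ω - z ω) - θ) ^ 2 - (x ω - θ) ^ 2
        = γstar ^ 2 * (y ω - z ω) ^ 2 - 2 * γstar * ((x ω - θ) * (y ω - z ω)) := by
      intro ω; ring
    simp_rw [this]
    rw [integral_sub ((hIyz2.const_mul _)) (hIcross.const_mul _),
      integral_const_mul, integral_const_mul]
  -- compute ∫(y-z)²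
  have hEy2 : (∫ ω, y ω ^ 2 ∂P) = var P y + (∫ ω, y ω ∂P) ^ 2 := by
    have := cov_eq hL2_0m hL2_0m
    simp only [var]; simp_rw [← pow_two] at this; rw [this]; ring
  have hEz2 : (∫ ω, z ω ^ 2 ∂P) = var P z + (∫ ω, z ω ∂P) ^ 2 := by
    have := cov_eq hL2_m hL2_m
    simp only [var]; simp_rw [← pow_two] at this; rw [this]; ring
  have hIy2 : Integrable (fun ω => y ω ^ 2) P := hL2_0m.integrable_sq
  have hIz2 : Integrable (fun ω => z ω ^ 2) P := hL2_m.integrable_sq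
  have hsq : (∫ ω, (y ω - z ω) ^ 2 ∂P) = var P y + var P z := by
    have e : ∀ ω, (y ω - z ω) ^ 2 = y ω ^ 2 - 2 * (y ω * z ω) + z ω ^ 2 := by
      intro ω; ring
    simp_rw [e]
    have ha : Integrable (fun ω => 2 * (y ω * z ω)) P := hiyz.const_mul 2
    have hb : Integrable (fun ω => y ω ^ 2 - 2 * (y ω * z ω)) P := hIy2.sub ha
    rw [integral_add hb hIz2,
      integral_sub hIy2 ha, integral_const_mul, hEy2, hEz2, hEyz, hmean]
    ring
  -- compute ∫(x-θ)(y-z)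
  have hcov : cov P x y = (∫ ω, x ω * y ω ∂P) - (∫ ω, x ω ∂P) * ∫ ω, y ω ∂P :=
    cov_eq hL2_0 hL2_0m
  have hcross : (∫ ω, (x ω - θ) * (y ω - z ω) ∂P) = cov P x y := by
    have e : ∀ ω, (x ω - θ) * (y ω - z ω)
        = x ω * y ω - x ω * z ω - θ * y ω + θ * z ω := by intro ω; ring
    simp_rw [e]
    have ha : Integrable (fun ω => θ * y ω) P := hiy.const_mul θ
    have hb : Integrable (fun ω => θ * z ω) P := hiz.const_mul θ
    have hc : Integrable (fun ω => x ω * y ω - x ω * z ω) P := hixy.sub hixz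
    have hd : Integrable (fun ω => x ω * y ω - x ω * z ω - θ * y ω) P := hc.sub ha
    rw [integral_add hd hb, integral_sub hc ha, integral_sub hixy hixz,
      integral_const_mul, integral_const_mul, hExz, hcov, hmean]
    ring
  rw [key, hsq, hcross]
  -- now pure algebra
  set c := cov P x y
  set V0 := var P x
  set Vy := var P y
  set Vz := var P z
  set S := Vy + Vz
  have hS : S ≠ 0 := ne_of_gt hvsum
  have hcorr : (corr P x y) ^ 2 = c ^ 2 / (V0 * Vy) := by
    unfold corr
    rw [div_pow, Real.sq_sqrt (by positivity)]
  rw [hcorr, hγstar]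
  field_simp
  ring
end

section
/- In the marginal mean estimation setting, for any measurable φ₁ : ℝ → ℝ with 0 < Var(φ₁(Y)) < ∞, the optimal weight γ* := n₁·Cov(X, φ₁(Y)) / (n·Var(φ₁(Y))) satisfies MSE(θ̂_{γ*}) − MSE(θ̂₀) = Var(θ̂_{γ*}) − Var(θ̂₀) = −n₁·Cov(X, φ₁(Y))² / (n₀·n·Var(φ₁(Y))). -/
open MeasureTheory ProbabilityTheory Finset
open scoped NNReal ENNReal BigOperators

section Aux
variable {Ωs : Type*} [MeasurableSpace Ωs] {P : Measure Ωs}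

lemma memL2_mul_integrable {f g : Ωs → ℝ} (hf : MemLp f 2 P) (hg : MemLp g 2 P) :
    Integrable (fun ω => f ω * g ω) P := by
  have h1 := hf.integrable_sq
  have h2 := hg.integrable_sq
  refine ((h1.add h2).div_const 2).mono' (hf.1.mul hg.1) ?_
  filter_upwards with ω
  simp only [Real.norm_eq_abs, abs_mul, Pi.add_apply]
  nlinarith [sq_nonneg (|f ω| - |g ω|), sq_abs (f ω), sq_abs (g ω), abs_nonneg (f ω),
    abs_nonneg (g ω)]

lemma sum_sq_integral_s7 [IsProbabilityMeasure P]
    (s : Finset ℕ) (U : ℕ → Ωs → ℝ)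
    (hL2 : ∀ i ∈ s, MemLp (U i) 2 P)
    (hindep : ∀ i ∈ s, ∀ j ∈ s, i ≠ j → IndepFun (U i) (U j) P)
    (hmean : ∀ i ∈ s, ∫ ω, U i ω ∂P = 0) :
    ∫ ω, (∑ i ∈ s, U i ω) ^ 2 ∂P = ∑ i ∈ s, ∫ ω, (U i ω) ^ 2 ∂P := by
  have hint : ∀ i ∈ s, ∀ j ∈ s, Integrable (fun ω => U i ω * U j ω) P :=
    fun i hi j hj => memL2_mul_integrable (hL2 i hi) (hL2 j hj)
  have expand : ∀ ω, (∑ i ∈ s, U i ω) ^ 2 = ∑ i ∈ s, ∑ j ∈ s, U i ω * U j ω := by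
    intro ω; rw [sq, Finset.sum_mul_sum]
  simp_rw [expand]
  rw [integral_finset_sum _ (fun i hi => integrable_finset_sum _ (fun j hj => hint i hi j hj))]
  refine Finset.sum_congr rfl fun i hi => ?_
  rw [integral_finset_sum _ (fun j hj => hint i hi j hj),
    Finset.sum_eq_single_of_mem i hi]
  · simp_rw [← sq]
  · intro j hj hji
    have h := (hindep i hi j hj (Ne.symm hji)).integral_mul_eq_mul_integral
      ((hL2 i hi).integrable one_le_two).aestronglyMeasurable
      ((hL2 j hj).integrable one_le_two).aestronglyMeasurable
    simpa [hmean i hi, hmean j hj] using h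

end Aux

/-- Marginal mean estimation: let `(X_i,Y_i)` be i.i.d. square-integrable
pairs in `ℝ²`, let `A₀, A₁` be disjoint finite index sets of sizes `n₀, n₁ ≥ 1`,
`n := n₀ + n₁`, and `θ := E X`.  With `θ̂₀ := n₀⁻¹Σ_{A₀} X_i`,
`θ̂₀₁ := n₀⁻¹Σ_{A₀} φ₁(Y_i)`, `θ̂₁ := n₁⁻¹Σ_{A₁} φ₁(Y_i)` and
`θ̂_γ := θ̂₀ − γ(θ̂₀₁ − θ̂₁)`, for any measurable `φ₁` with `0 < Var φ₁(Y) < ∞`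
the optimal weight `γ* := n₁·Cov(X, φ₁(Y))/(n·Var φ₁(Y))` satisfies
`MSE(θ̂_{γ*}) − MSE(θ̂₀) = Var(θ̂_{γ*}) − Var(θ̂₀)
  = −n₁·Cov(X, φ₁(Y))²/(n₀·n·Var φ₁(Y))`. -/
theorem stmt7 {Ωs : Type*} [MeasurableSpace Ωs] (P : Measure Ωs) [IsProbabilityMeasure P]
    (W : ℕ → Ωs → ℝ × ℝ) (hmeas : ∀ i, Measurable (W i))
    (hindep : iIndepFun W P)
    (hident : ∀ i, IdentDistrib (W i) (W 0) P P)
    (hL2 : MemLp (W 0) 2 P)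
    (A0 A1 : Finset ℕ) (hdisj : Disjoint A0 A1)
    (n0 n1 : ℕ) (hcard0 : A0.card = n0) (hcard1 : A1.card = n1)
    (hn0 : 1 ≤ n0) (hn1 : 1 ≤ n1)
    (φ1 : ℝ → ℝ) (hφ1 : Measurable φ1)
    (hφ1L2 : MemLp (fun ω => φ1 (W 0 ω).2) 2 P)
    (hvar : 0 < var P (fun ω => φ1 (W 0 ω).2))
    (θ : ℝ) (hθ : θ = ∫ ω, (W 0 ω).1 ∂P)
    (θhat0 θhat01 θhat1 : Ωs → ℝ)
    (h0 : θhat0 = fun ω => (∑ i ∈ A0, (W i ω).1) / n0)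
    (h01 : θhat01 = fun ω => (∑ i ∈ A0, φ1 (W i ω).2) / n0)
    (h1 : θhat1 = fun ω => (∑ i ∈ A1, φ1 (W i ω).2) / n1)
    (γstar : ℝ)
    (hγstar : γstar = n1 * cov P (fun ω => (W 0 ω).1) (fun ω => φ1 (W 0 ω).2)
        / ((n0 + n1 : ℕ) * var P (fun ω => φ1 (W 0 ω).2))) :
    ((∫ ω, (θhat0 ω - γstar * (θhat01 ω - θhat1 ω) - θ) ^ 2 ∂P)
        - (∫ ω, (θhat0 ω - θ) ^ 2 ∂P)
      = var P (fun ω => θhat0 ω - γstar * (θhat01 ω - θhat1 ω)) - var P θhat0)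
    ∧ var P (fun ω => θhat0 ω - γstar * (θhat01 ω - θhat1 ω)) - var P θhat0
      = -(n1 * (cov P (fun ω => (W 0 ω).1) (fun ω => φ1 (W 0 ω).2)) ^ 2
            / (n0 * (n0 + n1 : ℕ) * var P (fun ω => φ1 (W 0 ω).2))) := by
  classical
  have hn0' : (n0 : ℝ) ≠ 0 := Nat.cast_ne_zero.mpr (by omega)
  have hn1' : (n1 : ℝ) ≠ 0 := Nat.cast_ne_zero.mpr (by omega)
  have hnn' : ((n0 : ℝ) + n1) ≠ 0 := by positivity
  -- abbreviations (plain reals)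
  set m : ℝ := ∫ ω, (W 0 ω).1 ∂P with hm
  set mZ : ℝ := ∫ ω, φ1 (W 0 ω).2 ∂P with hmZ
  set c : ℝ := cov P (fun ω => (W 0 ω).1) (fun ω => φ1 (W 0 ω).2) with hc
  set v : ℝ := var P (fun ω => φ1 (W 0 ω).2) with hv
  set vX : ℝ := var P (fun ω => (W 0 ω).1) with hvX
  have hvne : v ≠ 0 := ne_of_gt hvar
  -- basic measurability
  have hmX : ∀ i, Measurable fun ω => (W i ω).1 := fun i => measurable_fst.comp (hmeas i)
  have hmZf : ∀ i, Measurable fun ω => φ1 (W i ω).2 :=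
    fun i => hφ1.comp (measurable_snd.comp (hmeas i))
  -- L2 of components
  have hXL2 : MemLp (fun ω => (W 0 ω).1) 2 P :=
    MemLp.of_le hL2 (hmX 0).aestronglyMeasurable
      (Filter.Eventually.of_forall fun ω => norm_fst_le (W 0 ω))
  have hXint : Integrable (fun ω => (W 0 ω).1) P := hXL2.integrable one_le_two
  have hZint : Integrable (fun ω => φ1 (W 0 ω).2) P := hφ1L2.integrable one_le_two
  -- identical distribution transfer
  have hid : ∀ (g : ℝ × ℝ → ℝ), Measurable g → ∀ i : ℕ,
      IdentDistrib (fun ω => g (W i ω)) (fun ω => g (W 0 ω)) P P :=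
    fun g hg i => (hident i).comp hg
  -- centered L2
  have hXc : MemLp (fun ω => (W 0 ω).1 - m) 2 P := hXL2.sub (memLp_const m)
  have hZc : MemLp (fun ω => φ1 (W 0 ω).2 - mZ) 2 P := hφ1L2.sub (memLp_const mZ)
  have hXXc : Integrable (fun ω => ((W 0 ω).1 - m) * ((W 0 ω).1 - m)) P :=
    memL2_mul_integrable hXc hXc
  have hXZc : Integrable (fun ω => ((W 0 ω).1 - m) * (φ1 (W 0 ω).2 - mZ)) P :=
    memL2_mul_integrable hXc hZc
  have hZZc : Integrable (fun ω => (φ1 (W 0 ω).2 - mZ) * (φ1 (W 0 ω).2 - mZ)) P :=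
    memL2_mul_integrable hZc hZc
  -- identify the moments
  have hvXeq : ∫ ω, ((W 0 ω).1 - m) * ((W 0 ω).1 - m) ∂P = vX := by
    rw [hvX]; simp only [var, cov]; rfl
  have hceq : ∫ ω, ((W 0 ω).1 - m) * (φ1 (W 0 ω).2 - mZ) ∂P = c := by
    rw [hc]; simp only [cov]; rfl
  have hveq : ∫ ω, (φ1 (W 0 ω).2 - mZ) * (φ1 (W 0 ω).2 - mZ) ∂P = v := by
    rw [hv]; simp only [var, cov]; rfl
  -- second moment of a general centered combination at index 0
  have hkey : ∀ γ : ℝ, ∫ ω, (((W 0 ω).1 - m) - γ * (φ1 (W 0 ω).2 - mZ)) ^ 2 ∂P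
      = vX - 2 * γ * c + γ ^ 2 * v := by
    intro γ
    have e : ∀ ω : Ωs, (((W 0 ω).1 - m) - γ * (φ1 (W 0 ω).2 - mZ)) ^ 2
        = (((W 0 ω).1 - m) * ((W 0 ω).1 - m)
            - (2 * γ) * (((W 0 ω).1 - m) * (φ1 (W 0 ω).2 - mZ)))
          + γ ^ 2 * ((φ1 (W 0 ω).2 - mZ) * (φ1 (W 0 ω).2 - mZ)) := fun ω => by ring
    have i2 : Integrable (fun ω => (2 * γ) * (((W 0 ω).1 - m) * (φ1 (W 0 ω).2 - mZ))) P :=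
      hXZc.const_mul _
    have i3 : Integrable (fun ω => γ ^ 2 * ((φ1 (W 0 ω).2 - mZ) * (φ1 (W 0 ω).2 - mZ))) P :=
      hZZc.const_mul _
    have i1 : Integrable (fun ω => ((W 0 ω).1 - m) * ((W 0 ω).1 - m)
        - (2 * γ) * (((W 0 ω).1 - m) * (φ1 (W 0 ω).2 - mZ))) P := hXXc.sub i2
    simp_rw [e]
    rw [integral_add i1 i3, integral_sub hXXc i2, integral_const_mul, integral_const_mul,
      hvXeq, hceq, hveq]
  -- mean zero of centered combination at index 0
  have hmean0 : ∀ γ : ℝ, ∫ ω, (((W 0 ω).1 - m) - γ * (φ1 (W 0 ω).2 - mZ)) ∂P = 0 := by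
    intro γ
    have i1 : Integrable (fun ω => (W 0 ω).1 - m) P := hXint.sub (integrable_const m)
    have i2 : Integrable (fun ω => φ1 (W 0 ω).2 - mZ) P := hZint.sub (integrable_const mZ)
    have i3 : Integrable (fun ω => γ * (φ1 (W 0 ω).2 - mZ)) P := i2.const_mul _
    rw [integral_sub i1 i3, integral_const_mul, integral_sub hXint (integrable_const m),
      integral_sub hZint (integrable_const mZ)]
    simp [hm, hmZ]
  have hmeanZ0 : ∫ ω, (φ1 (W 0 ω).2 - mZ) ∂P = 0 := by
    rw [integral_sub hZint (integrable_const mZ)]; simp [hmZ]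
  have hveqsq : ∫ ω, (φ1 (W 0 ω).2 - mZ) ^ 2 ∂P = v := by
    simp_rw [sq]; exact hveq
  -- L2 div-by-constant helper
  have hdivL2 : ∀ (f : Ωs → ℝ), MemLp f 2 P → ∀ r : ℝ, MemLp (fun ω => f ω / r) 2 P := by
    intro f hf r
    simpa [div_eq_mul_inv, mul_comm] using hf.const_mul r⁻¹
  -- the summand functions for the CAM estimator
  set G : ℕ → ℝ × ℝ → ℝ := fun i w =>
    if i ∈ A0 then ((w.1 - m) - γstar * (φ1 w.2 - mZ)) / n0
    else γstar * (φ1 w.2 - mZ) / n1 with hGdef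
  have hGmeas : ∀ i, Measurable (G i) := by
    intro i
    have m1 : Measurable fun w : ℝ × ℝ => ((w.1 - m) - γstar * (φ1 w.2 - mZ)) / (n0 : ℝ) :=
      ((measurable_fst.sub measurable_const).sub
        (((hφ1.comp measurable_snd).sub measurable_const).const_mul _)).div_const _
    have m2 : Measurable fun w : ℝ × ℝ => γstar * (φ1 w.2 - mZ) / (n1 : ℝ) :=
      ((((hφ1.comp measurable_snd).sub measurable_const).const_mul _)).div_const _
    by_cases hi : i ∈ A0 <;> simp only [hGdef, hi, if_true, if_false] <;>
      [exact m1; exact m2]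
  set U : ℕ → Ωs → ℝ := fun i ω => G i (W i ω) with hUdef
  have hG0L2 : ∀ i, MemLp (fun ω => G i (W 0 ω)) 2 P := by
    intro i
    have l1 : MemLp (fun ω => (((W 0 ω).1 - m) - γstar * (φ1 (W 0 ω).2 - mZ)) / (n0 : ℝ)) 2 P :=
      hdivL2 _ (hXc.sub (hZc.const_mul γstar)) _
    have l2 : MemLp (fun ω => γstar * (φ1 (W 0 ω).2 - mZ) / (n1 : ℝ)) 2 P :=
      hdivL2 _ (hZc.const_mul γstar) _
    by_cases hi : i ∈ A0 <;> simp only [hGdef, hi, if_true, if_false] <;>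
      [exact l1; exact l2]
  have hUL2 : ∀ i, MemLp (U i) 2 P := fun i =>
    ((hid (G i) (hGmeas i) i).memLp_iff).mpr (hG0L2 i)
  have hUmean : ∀ i, ∫ ω, U i ω ∂P = 0 := by
    intro i
    rw [show (∫ ω, U i ω ∂P) = ∫ ω, G i (W 0 ω) ∂P from (hid (G i) (hGmeas i) i).integral_eq]
    by_cases hi : i ∈ A0 <;> simp only [hGdef, hi, if_true, if_false]
    · rw [integral_div, hmean0 γstar]; simp
    · rw [integral_div, integral_const_mul, hmeanZ0]; simp
  have hUindep : ∀ i ∈ A0 ∪ A1, ∀ j ∈ A0 ∪ A1, i ≠ j → IndepFun (U i) (U j) P :=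
    fun i _ j _ hij => (hindep.indepFun hij).comp (hGmeas i) (hGmeas j)
  have hUsq : ∀ i, ∫ ω, (U i ω) ^ 2 ∂P = ∫ ω, (G i (W 0 ω)) ^ 2 ∂P := fun i =>
    (hid (fun w => (G i w) ^ 2) ((hGmeas i).pow_const 2) i).integral_eq
  have hUsq0 : ∀ i ∈ A0, ∫ ω, (U i ω) ^ 2 ∂P
      = (vX - 2 * γstar * c + γstar ^ 2 * v) / (n0 : ℝ) ^ 2 := by
    intro i hi
    rw [hUsq i]
    simp only [hGdef, hi, if_true, div_pow]
    rw [integral_div, hkey γstar]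
  have hUsq1 : ∀ i ∈ A1, ∫ ω, (U i ω) ^ 2 ∂P = γstar ^ 2 * v / (n1 : ℝ) ^ 2 := by
    intro i hi
    have hi0 : i ∉ A0 := Finset.disjoint_right.mp hdisj hi
    rw [hUsq i]
    simp only [hGdef, hi0, if_false, div_pow, mul_pow]
    rw [integral_div, integral_const_mul, hveqsq]
  -- summand functions for the baseline estimator
  set U0 : ℕ → Ωs → ℝ := fun i ω => ((W i ω).1 - m) / n0 with hU0def
  have hG0 : Measurable fun w : ℝ × ℝ => (w.1 - m) / (n0 : ℝ) :=
    (measurable_fst.sub measurable_const).div_const _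
  have hU0L2 : ∀ i, MemLp (U0 i) 2 P := fun i =>
    ((hid _ hG0 i).memLp_iff).mpr (hdivL2 _ hXc _)
  have hU0mean : ∀ i, ∫ ω, U0 i ω ∂P = 0 := by
    intro i
    rw [show (∫ ω, U0 i ω ∂P) = ∫ ω, ((W 0 ω).1 - m) / (n0 : ℝ) ∂P from
      (hid _ hG0 i).integral_eq, integral_div,
      integral_sub hXint (integrable_const m)]
    simp [hm]
  have hU0indep : ∀ i ∈ A0, ∀ j ∈ A0, i ≠ j → IndepFun (U0 i) (U0 j) P :=
    fun i _ j _ hij => (hindep.indepFun hij).comp hG0 hG0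
  have hU0sq : ∀ i ∈ A0, ∫ ω, (U0 i ω) ^ 2 ∂P = vX / (n0 : ℝ) ^ 2 := by
    intro i hi
    rw [show (∫ ω, (U0 i ω) ^ 2 ∂P) = ∫ ω, (((W 0 ω).1 - m) / (n0 : ℝ)) ^ 2 ∂P from
      (hid (fun w => ((w.1 - m) / (n0 : ℝ)) ^ 2) (hG0.pow_const 2) i).integral_eq]
    simp only [div_pow]
    rw [integral_div]
    congr 1
    simp_rw [sq]
    exact hvXeq
  -- sum representations
  have hS : ∀ ω, θhat0 ω - γstar * (θhat01 ω - θhat1 ω) - θ = ∑ i ∈ A0 ∪ A1, U i ω := by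
    intro ω
    rw [Finset.sum_union hdisj]
    have e0 : ∑ i ∈ A0, U i ω
        = ((∑ i ∈ A0, (W i ω).1) - n0 * m
            - γstar * ((∑ i ∈ A0, φ1 (W i ω).2) - n0 * mZ)) / n0 := by
      have h' : ∀ i ∈ A0, U i ω = (((W i ω).1 - m) - γstar * (φ1 (W i ω).2 - mZ)) / n0 := by
        intro i hi; simp only [hUdef, hGdef, hi, if_true]
      rw [Finset.sum_congr rfl h', ← Finset.sum_div]
      congr 1
      rw [Finset.sum_sub_distrib, Finset.sum_sub_distrib, ← Finset.mul_sum,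
        Finset.sum_sub_distrib, Finset.sum_const, Finset.sum_const, hcard0, nsmul_eq_mul,
        nsmul_eq_mul]
    have e1 : ∑ i ∈ A1, U i ω = γstar * ((∑ i ∈ A1, φ1 (W i ω).2) - n1 * mZ) / n1 := by
      have h' : ∀ i ∈ A1, U i ω = γstar * (φ1 (W i ω).2 - mZ) / n1 := by
        intro i hi
        have hi0 : i ∉ A0 := Finset.disjoint_right.mp hdisj hi
        simp only [hUdef, hGdef, hi0, if_false]
      rw [Finset.sum_congr rfl h', ← Finset.sum_div, ← Finset.mul_sum,
        Finset.sum_sub_distrib, Finset.sum_const, hcard1, nsmul_eq_mul]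
    rw [e0, e1]
    simp only [h0, h01, h1, hθ]
    field_simp
    ring
  have hS0 : ∀ ω, θhat0 ω - θ = ∑ i ∈ A0, U0 i ω := by
    intro ω
    have e0 : ∑ i ∈ A0, U0 i ω = ((∑ i ∈ A0, (W i ω).1) - n0 * m) / n0 := by
      rw [← Finset.sum_div, Finset.sum_sub_distrib, Finset.sum_const, hcard0, nsmul_eq_mul]
    rw [e0]
    simp only [h0, hθ]
    field_simp
  -- integrability of the sums
  have hUint : ∀ i, Integrable (U i) P := fun i => (hUL2 i).integrable one_le_two
  have hU0int : ∀ i, Integrable (U0 i) P := fun i => (hU0L2 i).integrable one_le_two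
  -- means of the estimators
  have hintγ : ∫ ω, (θhat0 ω - γstar * (θhat01 ω - θhat1 ω)) ∂P = θ := by
    have e : (fun ω => θhat0 ω - γstar * (θhat01 ω - θhat1 ω))
        = fun ω => θ + ∑ i ∈ A0 ∪ A1, U i ω := by
      funext ω; have := hS ω; linarith
    rw [e, integral_add (integrable_const θ)
        (integrable_finset_sum _ fun i _ => hUint i),
      integral_finset_sum _ fun i _ => hUint i]
    simp [hUmean]
  have hint0 : ∫ ω, θhat0 ω ∂P = θ := by
    have e : θhat0 = fun ω => θ + ∑ i ∈ A0, U0 i ω := by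
      funext ω; have := hS0 ω; linarith
    rw [e, integral_add (integrable_const θ)
        (integrable_finset_sum _ fun i _ => hU0int i),
      integral_finset_sum _ fun i _ => hU0int i]
    simp [hU0mean]
  -- variances
  have hvarγ : var P (fun ω => θhat0 ω - γstar * (θhat01 ω - θhat1 ω))
      = ∑ i ∈ A0 ∪ A1, ∫ ω, (U i ω) ^ 2 ∂P := by
    simp only [var, cov]
    rw [hintγ]
    calc ∫ ω, (θhat0 ω - γstar * (θhat01 ω - θhat1 ω) - θ)
          * (θhat0 ω - γstar * (θhat01 ω - θhat1 ω) - θ) ∂P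
        = ∫ ω, (∑ i ∈ A0 ∪ A1, U i ω) ^ 2 ∂P := by
          congr 1; funext ω; rw [← hS ω]; ring
      _ = _ := sum_sq_integral_s7 _ _ (fun i _ => hUL2 i) hUindep (fun i _ => hUmean i)
  have hvar0 : var P θhat0 = ∑ i ∈ A0, ∫ ω, (U0 i ω) ^ 2 ∂P := by
    simp only [var, cov]
    rw [hint0]
    calc ∫ ω, (θhat0 ω - θ) * (θhat0 ω - θ) ∂P
        = ∫ ω, (∑ i ∈ A0, U0 i ω) ^ 2 ∂P := by
          congr 1; funext ω; rw [← hS0 ω]; ring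
      _ = _ := sum_sq_integral_s7 _ _ (fun i _ => hU0L2 i) hU0indep (fun i _ => hU0mean i)
  -- MSE = Var
  have hMSEγ : ∫ ω, (θhat0 ω - γstar * (θhat01 ω - θhat1 ω) - θ) ^ 2 ∂P
      = var P (fun ω => θhat0 ω - γstar * (θhat01 ω - θhat1 ω)) := by
    simp only [var, cov]
    rw [hintγ]
    congr 1; funext ω; ring
  have hMSE0 : ∫ ω, (θhat0 ω - θ) ^ 2 ∂P = var P θhat0 := by
    simp only [var, cov]
    rw [hint0]
    congr 1; funext ω; ring
  -- evaluate the variance sums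
  have hvarγ' : var P (fun ω => θhat0 ω - γstar * (θhat01 ω - θhat1 ω))
      = n0 * ((vX - 2 * γstar * c + γstar ^ 2 * v) / (n0 : ℝ) ^ 2)
        + n1 * (γstar ^ 2 * v / (n1 : ℝ) ^ 2) := by
    rw [hvarγ, Finset.sum_union hdisj, Finset.sum_congr rfl hUsq0,
      Finset.sum_congr rfl hUsq1, Finset.sum_const, Finset.sum_const, hcard0, hcard1,
      nsmul_eq_mul, nsmul_eq_mul]
  have hvar0' : var P θhat0 = n0 * (vX / (n0 : ℝ) ^ 2) := by
    rw [hvar0, Finset.sum_congr rfl hU0sq, Finset.sum_const, hcard0, nsmul_eq_mul]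
  constructor
  · rw [hMSEγ, hMSE0]
  · rw [hvarγ', hvar0', hγstar]
    push_cast
    field_simp
    ring
end

section
/- In the marginal mean estimation setting with the identity choice φ₁(y) = y, and assuming Var(X) > 0 and Var(Y) > 0, the optimal weight γ* := n₁·Cov(X,Y)/(n·Var(Y)) yields Var(θ̂_{γ*}) = (Var(X)/n₀)·(1 − (n₁/n)·Corr²(X,Y)), where Corr(X,Y) := Cov(X,Y)/√(Var(X)·Var(Y)). -/
open MeasureTheory ProbabilityTheory Finset
open scoped NNReal ENNReal BigOperators

section Helpers
set_option linter.unusedSectionVars false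
variable {Ω : Type*} [MeasurableSpace Ω] {μ : Measure Ω} [IsProbabilityMeasure μ]

lemma memL2.integrable {f : Ω → ℝ} (hf : MemLp f 2 μ) : Integrable f μ :=
  hf.integrable (by norm_num)

lemma memL2.integrable_mul {f g : Ω → ℝ} (hf : MemLp f 2 μ) (hg : MemLp g 2 μ) :
    Integrable (fun ω => f ω * g ω) μ := by
  have h : MemLp (f • g) 1 μ := hg.smul hf
  exact memLp_one_iff_integrable.mp h

lemma memL2.center {f : Ω → ℝ} (hf : MemLp f 2 μ) (c : ℝ) :
    MemLp (fun ω => f ω - c) 2 μ := hf.sub (memLp_const c)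

lemma integral_center {f : Ω → ℝ} (hf : MemLp f 2 μ) :
    ∫ ω, (f ω - ∫ ω', f ω' ∂μ) ∂μ = 0 := by
  rw [integral_sub (memL2.integrable hf) (integrable_const _), integral_const]
  simp

lemma cov_comm (f g : Ω → ℝ) : cov μ f g = cov μ g f := by
  unfold cov; congr 1; funext ω; ring

lemma cov_smul_left (a : ℝ) (f g : Ω → ℝ) :
    cov μ (fun ω => a * f ω) g = a * cov μ f g := by
  unfold cov
  rw [← integral_const_mul]
  congr 1; funext ω
  rw [integral_const_mul]
  ring

lemma cov_smul_right (a : ℝ) (f g : Ω → ℝ) :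
    cov μ f (fun ω => a * g ω) = a * cov μ f g := by
  rw [cov_comm, cov_smul_left, cov_comm]

lemma cov_add_left {f g h : Ω → ℝ} (hf : MemLp f 2 μ) (hg : MemLp g 2 μ)
    (hh : MemLp h 2 μ) :
    cov μ (fun ω => f ω + g ω) h = cov μ f h + cov μ g h := by
  unfold cov
  have hm : ∫ ω, (f ω + g ω) ∂μ = (∫ ω, f ω ∂μ) + ∫ ω, g ω ∂μ :=
    integral_add (memL2.integrable hf) (memL2.integrable hg)
  rw [hm]
  have hpt : ∀ ω, ((fun ω => f ω + g ω) ω - ((∫ ω, f ω ∂μ) + ∫ ω, g ω ∂μ))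
        * (h ω - ∫ ω', h ω' ∂μ)
      = (f ω - ∫ ω', f ω' ∂μ) * (h ω - ∫ ω', h ω' ∂μ)
        + (g ω - ∫ ω', g ω' ∂μ) * (h ω - ∫ ω', h ω' ∂μ) := fun ω => by ring
  simp_rw [hpt]
  exact integral_add (memL2.integrable_mul (memL2.center hf _) (memL2.center hh _))
    (memL2.integrable_mul (memL2.center hg _) (memL2.center hh _))

lemma cov_add_right {f g h : Ω → ℝ} (hf : MemLp f 2 μ) (hg : MemLp g 2 μ)
    (hh : MemLp h 2 μ) :
    cov μ f (fun ω => g ω + h ω) = cov μ f g + cov μ f h := by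
  rw [cov_comm, cov_add_left hg hh hf, cov_comm g f, cov_comm h f]

lemma cov_indep {f g : Ω → ℝ} (hfg : IndepFun f g μ) (hf : MemLp f 2 μ)
    (hg : MemLp g 2 μ) : cov μ f g = 0 := by
  unfold cov
  set mf := ∫ ω', f ω' ∂μ
  set mg := ∫ ω', g ω' ∂μ
  have hind : IndepFun (fun ω => f ω - mf) (fun ω => g ω - mg) μ :=
    hfg.comp (measurable_id.sub_const mf) (measurable_id.sub_const mg)
  rw [hind.integral_fun_mul_eq_mul_integral (hf.1.sub aestronglyMeasurable_const)
    (hg.1.sub aestronglyMeasurable_const), integral_center hf, integral_center hg, mul_zero]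

lemma var_add {f g : Ω → ℝ} (hf : MemLp f 2 μ) (hg : MemLp g 2 μ) :
    var μ (fun ω => f ω + g ω) = var μ f + 2 * cov μ f g + var μ g := by
  unfold var
  rw [cov_add_left hf hg (show MemLp (fun ω => f ω + g ω) 2 μ from hf.add hg),
    cov_add_right hf hf hg, cov_add_right hg hf hg, cov_comm g f]
  ring

lemma var_smul (a : ℝ) (f : Ω → ℝ) : var μ (fun ω => a * f ω) = a ^ 2 * var μ f := by
  unfold var
  rw [cov_smul_left, cov_smul_right]; ring

lemma var_sum {Z : ℕ → Ω → ℝ} (hmeas : ∀ i, Measurable (Z i))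
    (hind : iIndepFun Z μ) (hL2 : ∀ i, MemLp (Z i) 2 μ)
    (s : Finset ℕ) :
    var μ (fun ω => ∑ i ∈ s, Z i ω) = ∑ i ∈ s, var μ (Z i) := by
  classical
  induction s using Finset.induction_on with
  | empty => simp [var, cov]
  | insert a s hnotmem ih =>
    have hfun : (∑ i ∈ s, Z i) = fun ω => ∑ i ∈ s, Z i ω := by
      funext ω; simp
    have hsum : MemLp (fun ω => ∑ i ∈ s, Z i ω) 2 μ := by
      rw [← hfun]; exact memLp_finset_sum' _ (fun i _ => hL2 i)
    have hindep : IndepFun (Z a) (fun ω => ∑ i ∈ s, Z i ω) μ := by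
      have h2 := hind.indepFun_finsetSum_of_notMem hmeas hnotmem
      rw [hfun] at h2
      exact h2.symm
    have hcov : cov μ (Z a) (fun ω => ∑ i ∈ s, Z i ω) = 0 :=
      cov_indep hindep (hL2 a) hsum
    have heq : (fun ω => ∑ i ∈ insert a s, Z i ω)
        = fun ω => Z a ω + ∑ i ∈ s, Z i ω := by
      funext ω; exact Finset.sum_insert hnotmem
    rw [heq, var_add (hL2 a) hsum, hcov, ih, Finset.sum_insert hnotmem]
    ring

lemma var_identDistrib {f g : Ω → ℝ} (h : IdentDistrib f g μ μ) :
    var μ f = var μ g := by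
  have hm : ∫ ω, f ω ∂μ = ∫ ω, g ω ∂μ := h.integral_eq
  unfold var cov
  rw [hm]
  set m := ∫ ω', g ω' ∂μ
  have h2 : IdentDistrib (fun ω => (f ω - m) * (f ω - m))
      (fun ω => (g ω - m) * (g ω - m)) μ μ :=
    h.comp (measurable_id.sub_const m |>.mul (measurable_id.sub_const m))
  exact h2.integral_eq

lemma var_linear {f g : Ω → ℝ} (hf : MemLp f 2 μ) (hg : MemLp g 2 μ) (a b : ℝ) :
    var μ (fun ω => a * (f ω + b * g ω))
      = a ^ 2 * (var μ f + 2 * b * cov μ f g + b ^ 2 * var μ g) := by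
  rw [var_smul a (fun ω => f ω + b * g ω),
    var_add hf (show MemLp (fun ω => b * g ω) 2 μ from hg.const_mul b),
    cov_smul_right, var_smul]
  ring


end Helpers

/-- Marginal mean estimation with the identity choice `φ₁(y) = y`:
with `Var X > 0` and `Var Y > 0`, the optimal weight `γ* := n₁·Cov(X,Y)/(n·Var Y)`
yields `Var(θ̂_{γ*}) = (Var X/n₀)·(1 − (n₁/n)·Corr²(X,Y))`. -/
theorem stmt9 {Ωs : Type*} [MeasurableSpace Ωs] (P : Measure Ωs) [IsProbabilityMeasure P]
    (W : ℕ → Ωs → ℝ × ℝ) (hmeas : ∀ i, Measurable (W i))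
    (hindep : iIndepFun W P)
    (hident : ∀ i, IdentDistrib (W i) (W 0) P P)
    (hL2 : MemLp (W 0) 2 P)
    (A0 A1 : Finset ℕ) (hdisj : Disjoint A0 A1)
    (n0 n1 : ℕ) (hcard0 : A0.card = n0) (hcard1 : A1.card = n1)
    (hn0 : 1 ≤ n0) (hn1 : 1 ≤ n1)
    (hvarX : 0 < var P (fun ω => (W 0 ω).1))
    (hvarY : 0 < var P (fun ω => (W 0 ω).2))
    (θhat0 θhat01 θhat1 : Ωs → ℝ)
    (h0 : θhat0 = fun ω => (∑ i ∈ A0, (W i ω).1) / n0)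
    (h01 : θhat01 = fun ω => (∑ i ∈ A0, (W i ω).2) / n0)
    (h1 : θhat1 = fun ω => (∑ i ∈ A1, (W i ω).2) / n1)
    (γstar : ℝ)
    (hγstar : γstar = n1 * cov P (fun ω => (W 0 ω).1) (fun ω => (W 0 ω).2)
        / ((n0 + n1 : ℕ) * var P (fun ω => (W 0 ω).2))) :
    var P (fun ω => θhat0 ω - γstar * (θhat01 ω - θhat1 ω))
      = (var P (fun ω => (W 0 ω).1) / n0)
          * (1 - ((n1 : ℝ) / (n0 + n1 : ℕ))
              * (corr P (fun ω => (W 0 ω).1) (fun ω => (W 0 ω).2)) ^ 2) := by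

  classical
  have hn0' : (n0 : ℝ) ≠ 0 := Nat.cast_ne_zero.mpr (by omega)
  have hn1' : (n1 : ℝ) ≠ 0 := Nat.cast_ne_zero.mpr (by omega)
  have hnn : ((n0 + n1 : ℕ) : ℝ) ≠ 0 := Nat.cast_ne_zero.mpr (by omega)
  -- measurability and L2 of components
  have hWL2 : ∀ i, MemLp (W i) 2 P := fun i => (hident i).symm.memLp_snd hL2
  have hXL2 : ∀ i, MemLp (fun ω => (W i ω).1) 2 P := fun i =>
    (hWL2 i).of_le ((measurable_fst.comp (hmeas i)).aestronglyMeasurable)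
      (Filter.Eventually.of_forall fun ω => norm_fst_le (W i ω))
  have hYL2 : ∀ i, MemLp (fun ω => (W i ω).2) 2 P := fun i =>
    (hWL2 i).of_le ((measurable_snd.comp (hmeas i)).aestronglyMeasurable)
      (Filter.Eventually.of_forall fun ω => norm_snd_le (W i ω))
  -- the summand family
  set φ : ℕ → ℝ × ℝ → ℝ := fun i p =>
    if i ∈ A0 then (n0 : ℝ)⁻¹ * (p.1 + (-γstar) * p.2) else (γstar / n1) * p.2 with hφ
  have hφmeas : ∀ i, Measurable (φ i) := by
    intro i
    by_cases hi : i ∈ A0 <;> simp only [hφ, hi, if_pos, if_neg, not_false_iff] <;>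
      fun_prop
  set Z : ℕ → Ωs → ℝ := fun i => φ i ∘ W i with hZ
  have hZmeas : ∀ i, Measurable (Z i) := fun i => (hφmeas i).comp (hmeas i)
  have hZindep : iIndepFun Z P := hindep.comp φ hφmeas
  have hZL2 : ∀ i, MemLp (Z i) 2 P := by
    intro i
    by_cases hi : i ∈ A0
    · have : Z i = fun ω => (n0 : ℝ)⁻¹ * ((W i ω).1 + (-γstar) * (W i ω).2) := by
        funext ω; simp [hZ, hφ, hi]
      rw [this]
      exact (((hXL2 i).add (((hYL2 i).const_mul (-γstar)))).const_mul _)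
    · have : Z i = fun ω => (γstar / n1) * (W i ω).2 := by
        funext ω; simp [hZ, hφ, hi]
      rw [this]
      exact ((hYL2 i).const_mul _)
  -- rewrite the estimator as a sum
  have hθ : (fun ω => θhat0 ω - γstar * (θhat01 ω - θhat1 ω))
      = fun ω => ∑ i ∈ A0 ∪ A1, Z i ω := by
    funext ω
    rw [h0, h01, h1, Finset.sum_union hdisj]
    have e0 : ∑ i ∈ A0, Z i ω
        = ∑ i ∈ A0, (n0 : ℝ)⁻¹ * ((W i ω).1 + (-γstar) * (W i ω).2) :=
      Finset.sum_congr rfl fun i hi => by simp [hZ, hφ, hi]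
    have e1 : ∑ i ∈ A1, Z i ω = ∑ i ∈ A1, (γstar / n1) * (W i ω).2 :=
      Finset.sum_congr rfl fun i hi => by
        simp [hZ, hφ, Finset.disjoint_right.mp hdisj hi]
    rw [e0, e1, ← Finset.mul_sum, ← Finset.mul_sum, Finset.sum_add_distrib,
      ← Finset.mul_sum]
    field_simp
    ring
  rw [hθ, var_sum hZmeas hZindep hZL2]
  rw [Finset.sum_union hdisj]
  -- identify each variance with that of the corresponding function of W 0
  have hvA0 : ∀ i ∈ A0, var P (Z i)
      = var P (fun ω => (n0 : ℝ)⁻¹ * ((W 0 ω).1 + (-γstar) * (W 0 ω).2)) := by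
    intro i hi
    have hZi : Z i = fun ω => (n0 : ℝ)⁻¹ * ((W i ω).1 + (-γstar) * (W i ω).2) := by
      funext ω; simp [hZ, hφ, hi]
    rw [hZi]
    exact var_identDistrib ((hident i).comp (by fun_prop :
      Measurable (fun p : ℝ × ℝ => (n0 : ℝ)⁻¹ * (p.1 + (-γstar) * p.2))))
  have hvA1 : ∀ i ∈ A1, var P (Z i)
      = var P (fun ω => (γstar / n1) * (W 0 ω).2) := by
    intro i hi
    have hZi : Z i = fun ω => (γstar / n1) * (W i ω).2 := by
      funext ω; simp [hZ, hφ, Finset.disjoint_right.mp hdisj hi]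
    rw [hZi]
    exact var_identDistrib ((hident i).comp (by fun_prop :
      Measurable (fun p : ℝ × ℝ => (γstar / n1) * p.2)))
  rw [Finset.sum_congr rfl hvA0, Finset.sum_congr rfl hvA1,
    Finset.sum_const, Finset.sum_const, hcard0, hcard1, nsmul_eq_mul, nsmul_eq_mul]
  -- compute the two variances
  rw [var_linear (hXL2 0) (hYL2 0), var_smul]
  set vX := var P (fun ω => (W 0 ω).1)
  set vY := var P (fun ω => (W 0 ω).2)
  set c := cov P (fun ω => (W 0 ω).1) (fun ω => (W 0 ω).2)
  have hcorr2 : corr P (fun ω => (W 0 ω).1) (fun ω => (W 0 ω).2) ^ 2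
      = c ^ 2 / (vX * vY) := by
    rw [corr, div_pow, Real.sq_sqrt (by positivity)]
  rw [hcorr2, hγstar]
  have hvX' : vX ≠ 0 := ne_of_gt hvarX
  have hvY' : vY ≠ 0 := ne_of_gt hvarY
  push_cast
  field_simp
  ring
end
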